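/- In dimension d = 1, let W : ℝ → ℝ be twice continuously differentiable with Z = ∫_ℝ e^{-W(v)/θ} dv finite and with M, vM, v²M integrable. Set c = ∫_ℝ v M(v) dv and define ψ(v) = −(1/θ)(v − c) M(v). Then ψ satisfies Q(ψ)(v) = (1/θ) W'(v) M(v) pointwise on ℝ, and consequently the drift coefficient is K = −∫_ℝ v ψ(v) dv = (1/θ) ∫_ℝ (v − c)² M(v) dv. -/

import Mathlib

open MeasureTheory

/-- The one-dimensional Fokker–Planck operator `Q f = (W' f + θ f')'`. -/
noncomputable def Qop1 (θ : ℝ) (W f : ℝ → ℝ) : ℝ → ℝ :=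
  fun v => deriv (fun w => deriv W w * f w + θ * deriv f w) v

/-- in dimension one, `ψ(v) = -(1/θ)(v - c) M(v)` with
`c = ∫ v M(v) dv` solves `Q ψ = (1/θ) W' M`, and the drift coefficient is
`K = -∫ v ψ dv = (1/θ) ∫ (v - c)² M dv`. -/
theorem drift_coefficient_one_dimensional (θ : ℝ) (hθ : 0 < θ)
    (W : ℝ → ℝ) (hW : ContDiff ℝ 2 W)
    (hZint : Integrable (fun v => Real.exp (-W v / θ)))
    (Z : ℝ) (hZ : Z = ∫ v : ℝ, Real.exp (-W v / θ))
    (M : ℝ → ℝ) (hM : ∀ v, M v = Z⁻¹ * Real.exp (-W v / θ))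
    (hMint : Integrable M)
    (hvMint : Integrable (fun v => v * M v))
    (hv2Mint : Integrable (fun v => v ^ 2 * M v))
    (c : ℝ) (hc : c = ∫ v : ℝ, v * M v)
    (ψ : ℝ → ℝ) (hψ : ∀ v, ψ v = -(1 / θ) * (v - c) * M v) :
    (∀ v, Qop1 θ W ψ v = 1 / θ * deriv W v * M v)
    ∧ (-∫ v : ℝ, v * ψ v) = 1 / θ * ∫ v : ℝ, (v - c) ^ 2 * M v := by
  have hθ' : θ ≠ 0 := hθ.ne'
  have hWd : ∀ v, HasDerivAt W (deriv W v) v := fun v =>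
    ((hW.differentiable (by norm_num)) v).hasDerivAt
  -- derivative of M
  have hMd : ∀ v, HasDerivAt M (-(deriv W v / θ) * M v) v := by
    intro v
    have h1 : HasDerivAt (fun w => -W w / θ) (-deriv W v / θ) v := ((hWd v).neg).div_const θ
    have h3 : HasDerivAt (fun w => Z⁻¹ * Real.exp (-W w / θ))
        (Z⁻¹ * (Real.exp (-W v / θ) * (-deriv W v / θ))) v := (h1.exp).const_mul _
    have heq : M = fun w => Z⁻¹ * Real.exp (-W w / θ) := funext hM
    rw [← heq] at h3
    convert h3 using 1
    rw [hM v]; ring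
  -- derivative of ψ
  have hψd : ∀ v, HasDerivAt ψ
      (-(1 / θ) * 1 * M v + -(1 / θ) * (v - c) * (-(deriv W v / θ) * M v)) v := by
    intro v
    have hid : HasDerivAt (fun w => -(1 / θ) * (w - c)) (-(1 / θ) * 1) v :=
      ((hasDerivAt_id v).sub_const c).const_mul _
    have h := hid.mul (hMd v)
    have heq : ψ = fun w => -(1 / θ) * (w - c) * M w := funext hψ
    rw [heq]
    exact h
  -- the inner function equals -M
  have hinner : (fun w => deriv W w * ψ w + θ * deriv ψ w) = fun w => -M w := by
    funext w
    rw [(hψd w).deriv, hψ w]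
    field_simp
    ring
  constructor
  · intro v
    rw [Qop1, hinner, deriv.fun_neg, (hMd v).deriv]
    field_simp
  · -- integral identities
    have hZpos : 0 < Z := by rw [hZ]; exact integral_exp_pos (by simpa [neg_div] using hZint)
    have hMone : (∫ v : ℝ, M v) = 1 := by
      rw [funext hM, integral_const_mul, ← hZ, inv_mul_cancel₀ hZpos.ne']
    have hvcM : Integrable (fun v => (v - c) * M v) := by
      have : (fun v => (v - c) * M v) = fun v => v * M v - c * M v := by funext v; ring
      rw [this]; exact hvMint.sub (hMint.const_mul c)
    have hvvcM : Integrable (fun v => v * ((v - c) * M v)) := by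
      have : (fun v => v * ((v - c) * M v)) = fun v => v ^ 2 * M v - c * (v * M v) := by
        funext v; ring
      rw [this]; exact hv2Mint.sub (hvMint.const_mul c)
    have hvcM0 : (∫ v : ℝ, (v - c) * M v) = 0 := by
      have : (∫ v : ℝ, (v - c) * M v) = (∫ v : ℝ, v * M v) - c * ∫ v : ℝ, M v := by
        rw [← integral_const_mul, ← integral_sub hvMint (hMint.const_mul c)]
        congr 1; funext v; ring
      rw [this, hMone, ← hc]; ring
    have hsq : (∫ v : ℝ, (v - c) ^ 2 * M v) = ∫ v : ℝ, v * ((v - c) * M v) := by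
      have h1 : (fun v => (v - c) ^ 2 * M v)
          = fun v => v * ((v - c) * M v) - c * ((v - c) * M v) := by funext v; ring
      rw [h1, integral_sub hvvcM (hvcM.const_mul c), integral_const_mul, hvcM0]; ring
    have hlhs : (fun v => v * ψ v) = fun v => -(1 / θ) * (v * ((v - c) * M v)) := by
      funext v; rw [hψ v]; ring
    rw [hlhs, integral_const_mul, hsq]
    ring
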